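/- Let A be an m×m real symmetric matrix with eigenvalues λ₁, λ₂, ..., λ_m (counted with multiplicity) and let u be a unit eigenvector of A corresponding to λ₁. Let B be an n×n real symmetric matrix with eigenvalues μ₁, μ₂, ..., μ_n (counted with multiplicity) and let v be a unit eigenvector of B corresponding to μ₁. Then for any real ρ, the (m+n)×(m+n) block matrix C = [[A, ρ u vᵀ], [ρ v uᵀ, B]] has eigenvalues λ₂, ..., λ_m, μ₂, ..., μ_n, γ₁, γ₂ (with multiplicity), where γ₁, γ₂ are the eigenvalues of the 2×2 matrix [[λ₁, ρ], [ρ, μ₁]]. -/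

import Mathlib

open Matrix Polynomial

lemma eval_charpoly_eq' {k : Type*} [Fintype k] [DecidableEq k] (M : Matrix k k ℝ) (x : ℝ) :
    M.charpoly.eval x = (x • (1 : Matrix k k ℝ) - M).det := by
  show (Polynomial.evalRingHom x) (charmatrix M).det = _
  rw [RingHom.map_det]
  congr 1
  ext i j
  by_cases h : i = j <;>
    simp [charmatrix_apply, Matrix.one_apply, h, Matrix.diagonal_apply]

lemma vecMulVec_mul' {k l o : Type*} [Fintype l] (a : k → ℝ) (b : l → ℝ) (N : Matrix l o ℝ) :
    vecMulVec a b * N = vecMulVec a (b ᵥ* N) := by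
  ext i j
  simp [Matrix.mul_apply, vecMulVec_apply, Matrix.vecMul, dotProduct, Finset.mul_sum, mul_assoc]

lemma mul_vecMulVec' {k l o : Type*} [Fintype l] (N : Matrix k l ℝ) (a : l → ℝ) (b : o → ℝ) :
    N * vecMulVec a b = vecMulVec (N *ᵥ a) b := by
  ext i j
  simp only [Matrix.mul_apply, vecMulVec_apply, Matrix.mulVec, dotProduct]
  rw [Finset.sum_mul]
  exact Finset.sum_congr rfl fun x _ => by ring

lemma smul_vecMulVec' {k o : Type*} (e : ℝ) (a : k → ℝ) (b : o → ℝ) :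
    vecMulVec (e • a) b = e • vecMulVec a b := by
  ext i j; simp [vecMulVec_apply, mul_assoc]

lemma vecMulVec_smul' {k o : Type*} (e : ℝ) (a : k → ℝ) (b : o → ℝ) :
    vecMulVec a (e • b) = e • vecMulVec a b := by
  ext i j; simp [vecMulVec_apply]; ring

lemma vecMulVec_mul_vecMulVec' {k l o : Type*} [Fintype l]
    (a : k → ℝ) (b c : l → ℝ) (d : o → ℝ) :
    vecMulVec a b * vecMulVec c d = (b ⬝ᵥ c) • vecMulVec a d := by
  ext i j
  simp only [Matrix.mul_apply, vecMulVec_apply, dotProduct, Matrix.smul_apply, smul_eq_mul]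
  rw [Finset.sum_mul]
  exact Finset.sum_congr rfl fun x _ => by ring

/-- Fiedler's lemma: eigenvalues of the bordered block matrix
`[[A, ρ u vᵀ], [ρ v uᵀ, B]]`. -/
theorem stmt_0 (m n : ℕ)
    (A : Matrix (Fin (m + 1)) (Fin (m + 1)) ℝ) (hA : A.IsSymm)
    (B : Matrix (Fin (n + 1)) (Fin (n + 1)) ℝ) (hB : B.IsSymm)
    (lam : Fin (m + 1) → ℝ) (mu : Fin (n + 1) → ℝ)
    (hAspec : A.charpoly.roots = Finset.univ.val.map lam)
    (hBspec : B.charpoly.roots = Finset.univ.val.map mu)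
    (u : Fin (m + 1) → ℝ) (v : Fin (n + 1) → ℝ)
    (hu : A.mulVec u = lam 0 • u) (hv : B.mulVec v = mu 0 • v)
    (hu1 : ∑ i, u i ^ 2 = 1) (hv1 : ∑ i, v i ^ 2 = 1)
    (ρ : ℝ) :
    (fromBlocks A (ρ • vecMulVec u v) (ρ • vecMulVec v u) B).charpoly.roots
      = Finset.univ.val.map (fun i : Fin m => lam i.succ)
        + Finset.univ.val.map (fun i : Fin n => mu i.succ)
        + (!![lam 0, ρ; ρ, mu 0] : Matrix (Fin 2) (Fin 2) ℝ).charpoly.roots := by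
  set T : Matrix (Fin 2) (Fin 2) ℝ := !![lam 0, ρ; ρ, mu 0] with hT
  set Ct := fromBlocks A (ρ • vecMulVec u v) (ρ • vecMulVec v u) B with hCt
  have hdotu : u ⬝ᵥ u = 1 := by simpa [dotProduct, sq] using hu1
  have hdotv : v ⬝ᵥ v = 1 := by simpa [dotProduct, sq] using hv1
  have hl0 : lam 0 ∈ A.charpoly.roots := by
    rw [hAspec]; exact Multiset.mem_map_of_mem _ (Finset.mem_univ_val _)
  have hm0 : mu 0 ∈ B.charpoly.roots := by
    rw [hBspec]; exact Multiset.mem_map_of_mem _ (Finset.mem_univ_val _)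
  have hTeval : ∀ x : ℝ, T.charpoly.eval x = (x - lam 0) * (x - mu 0) - ρ * ρ := by
    intro x
    rw [eval_charpoly_eq', Matrix.det_fin_two]
    simp [Matrix.one_apply, hT]
  -- key polynomial identity
  have key : Ct.charpoly * ((X - C (lam 0)) * (X - C (mu 0)))
      = A.charpoly * B.charpoly * T.charpoly := by
    apply Polynomial.eq_of_infinite_eval_eq
    have hfin : ({x : ℝ | x ∈ A.charpoly.roots} ∪ {x : ℝ | x ∈ B.charpoly.roots}).Finite :=
      (A.charpoly.roots.finite_toSet).union (B.charpoly.roots.finite_toSet)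
    refine (hfin.infinite_compl).mono ?_
    intro x hx
    simp only [Set.mem_compl_iff, Set.mem_union, Set.mem_setOf_eq, not_or] at hx
    obtain ⟨hxA, hxB⟩ := hx
    have hxl : x ≠ lam 0 := fun h => hxA (h ▸ hl0)
    have hxm : x ≠ mu 0 := fun h => hxB (h ▸ hm0)
    have hxl0 : x - lam 0 ≠ 0 := sub_ne_zero.2 hxl
    have hxm0 : x - mu 0 ≠ 0 := sub_ne_zero.2 hxm
    have hevalA : A.charpoly.eval x ≠ 0 := fun h =>
      hxA (Polynomial.mem_roots'.2 ⟨(A.charpoly_monic).ne_zero, h⟩)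
    have hevalB : B.charpoly.eval x ≠ 0 := fun h =>
      hxB (Polynomial.mem_roots'.2 ⟨(B.charpoly_monic).ne_zero, h⟩)
    have hdA : (x • (1 : Matrix (Fin (m+1)) (Fin (m+1)) ℝ) - A).det ≠ 0 := by
      rwa [← eval_charpoly_eq']
    have hdB : (x • (1 : Matrix (Fin (n+1)) (Fin (n+1)) ℝ) - B).det ≠ 0 := by
      rwa [← eval_charpoly_eq']
    haveI iA : Invertible (x • (1 : Matrix (Fin (m+1)) (Fin (m+1)) ℝ) - A) :=
      Matrix.invertibleOfIsUnitDet _ (Ne.isUnit hdA)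
    set MA := x • (1 : Matrix (Fin (m+1)) (Fin (m+1)) ℝ) - A with hMA
    set MB := x • (1 : Matrix (Fin (n+1)) (Fin (n+1)) ℝ) - B with hMB
    -- eigen-facts
    have hMAu : MA *ᵥ u = (x - lam 0) • u := by
      rw [hMA, Matrix.sub_mulVec, Matrix.smul_mulVec, Matrix.one_mulVec, hu, sub_smul]
    have hMBv : MB *ᵥ v = (x - mu 0) • v := by
      rw [hMB, Matrix.sub_mulVec, Matrix.smul_mulVec, Matrix.one_mulVec, hv, sub_smul]
    have hinvu : MA⁻¹ *ᵥ u = (x - lam 0)⁻¹ • u := by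
      have h1 : MA⁻¹ *ᵥ (MA *ᵥ u) = u := by
        rw [Matrix.mulVec_mulVec, Matrix.nonsing_inv_mul _ (Ne.isUnit hdA), Matrix.one_mulVec]
      rw [hMAu, Matrix.mulVec_smul] at h1
      rw [eq_comm, inv_smul_eq_iff₀ hxl0, h1]
    have hsymmA : (MA⁻¹)ᵀ = MA⁻¹ := by
      rw [Matrix.transpose_nonsing_inv]
      congr 1
      rw [hMA, Matrix.transpose_sub, Matrix.transpose_smul, Matrix.transpose_one, hA]
    have hvecu : u ᵥ* MA⁻¹ = (x - lam 0)⁻¹ • u := by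
      rw [← hsymmA, Matrix.vecMul_transpose, hinvu]
    -- the Schur complement product
    have hprod : (ρ • vecMulVec v u) * MA⁻¹ * (ρ • vecMulVec u v)
        = (ρ * ρ * (x - lam 0)⁻¹) • vecMulVec v v := by
      rw [Matrix.smul_mul, Matrix.smul_mul, Matrix.mul_smul, vecMulVec_mul', hvecu,
        _root_.vecMulVec_smul', Matrix.smul_mul, vecMulVec_mul_vecMulVec', hdotu, one_smul,
        smul_smul, smul_smul]
    set c : ℝ := ρ * ρ * (x - lam 0)⁻¹ with hc
    have hfact : MB - c • vecMulVec v v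
        = MB * (1 + vecMulVec ((-(c * (x - mu 0)⁻¹)) • v) v) := by
      rw [smul_vecMulVec', Matrix.mul_add, Matrix.mul_one, Matrix.mul_smul, mul_vecMulVec',
        hMBv, smul_vecMulVec', smul_smul]
      have : -(c * (x - mu 0)⁻¹) * (x - mu 0) = -c := by field_simp
      rw [this, sub_eq_add_neg, neg_smul]
    have hdet2 : (MB - c • vecMulVec v v).det = MB.det * (1 - c * (x - mu 0)⁻¹) := by
      rw [hfact, det_mul, vecMulVec_eq Unit, Matrix.det_one_add_replicateCol_mul_replicateRow]
      rw [dotProduct_smul, hdotv, smul_eq_mul, mul_one]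
      ring
    -- assemble
    simp only [Set.mem_setOf_eq, eval_mul, eval_sub, eval_X, eval_C]
    rw [eval_charpoly_eq', eval_charpoly_eq', eval_charpoly_eq', hTeval]
    have hblock : x • (1 : Matrix (Fin (m+1) ⊕ Fin (n+1)) (Fin (m+1) ⊕ Fin (n+1)) ℝ) - Ct
        = fromBlocks MA (-(ρ • vecMulVec u v)) (-(ρ • vecMulVec v u)) MB := by
      rw [hCt, ← Matrix.fromBlocks_one, Matrix.fromBlocks_smul]
      simp [Matrix.fromBlocks_neg, Matrix.fromBlocks_add, sub_eq_add_neg, hMA, hMB]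
    rw [hblock, Matrix.det_fromBlocks₁₁]
    rw [invOf_eq_nonsing_inv, Matrix.neg_mul, Matrix.mul_neg, Matrix.neg_mul, neg_neg, hprod, hdet2]
    rw [← hMA, ← hMB, hc]
    field_simp
  -- pass to roots
  have hC0 : Ct.charpoly ≠ 0 := (Ct.charpoly_monic).ne_zero
  have hA0 : A.charpoly ≠ 0 := (A.charpoly_monic).ne_zero
  have hB0 : B.charpoly ≠ 0 := (B.charpoly_monic).ne_zero
  have hT0 : T.charpoly ≠ 0 := (T.charpoly_monic).ne_zero
  have hXl : (X - C (lam 0) : ℝ[X]) ≠ 0 := X_sub_C_ne_zero _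
  have hXm : (X - C (mu 0) : ℝ[X]) ≠ 0 := X_sub_C_ne_zero _
  have H := congrArg Polynomial.roots key
  rw [Polynomial.roots_mul (mul_ne_zero hC0 (mul_ne_zero hXl hXm)),
    Polynomial.roots_mul (mul_ne_zero hXl hXm), roots_X_sub_C, roots_X_sub_C,
    Polynomial.roots_mul (mul_ne_zero (mul_ne_zero hA0 hB0) hT0),
    Polynomial.roots_mul (mul_ne_zero hA0 hB0), hAspec, hBspec] at H
  have hmapA : (Finset.univ.val.map lam)
      = lam 0 ::ₘ Finset.univ.val.map (fun i : Fin m => lam i.succ) := by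
    rw [Fin.univ_succ, Finset.cons_val, Multiset.map_cons, Finset.map_val, Multiset.map_map]
    rfl
  have hmapB : (Finset.univ.val.map mu)
      = mu 0 ::ₘ Finset.univ.val.map (fun i : Fin n => mu i.succ) := by
    rw [Fin.univ_succ, Finset.cons_val, Multiset.map_cons, Finset.map_val, Multiset.map_map]
    rfl
  rw [hmapA, hmapB] at H
  have H2 : Ct.charpoly.roots + ({lam 0} + {mu 0})
      = (Finset.univ.val.map (fun i : Fin m => lam i.succ)
        + Finset.univ.val.map (fun i : Fin n => mu i.succ)
        + T.charpoly.roots) + ({lam 0} + {mu 0}) := by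
    rw [H]
    simp only [← Multiset.singleton_add]
    abel
  exact add_right_cancel H2
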